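/- arXiv:1906.05451 — 2 statements merged into one kernel-verified Lean document; each statement's English description precedes it below -/
import Mathlib

section
/- Let x_k, y_k (k = 1,…,N) be nonnegative real numbers and c > 0. If x_k y_k ≥ c² + z_k² for all k with z_k ≥ 0, then (∑_k x_k)(∑_k y_k) ≥ N²c² + (∑_k z_k)². -/
open Complex in
theorem stmt1 (N : ℕ) (c : ℝ) (hc : 0 < c) (x y z : Fin N → ℝ)
    (hx : ∀ k, 0 ≤ x k) (hy : ∀ k, 0 ≤ y k) (hz : ∀ k, 0 ≤ z k)
    (h : ∀ k, x k * y k ≥ c ^ 2 + z k ^ 2) :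
    (∑ k, x k) * (∑ k, y k) ≥ (N : ℝ) ^ 2 * c ^ 2 + (∑ k, z k) ^ 2 := by
  have cs : (∑ k, Real.sqrt (x k) * Real.sqrt (y k)) ^ 2 ≤
      (∑ k, x k) * (∑ k, y k) := by
    have := Finset.sum_mul_sq_le_sq_mul_sq Finset.univ (fun k => Real.sqrt (x k))
      (fun k => Real.sqrt (y k))
    simpa [Real.sq_sqrt (hx _), Real.sq_sqrt (hy _)] using this
  -- triangle inequality in ℂ
  have tri : ‖(∑ k : Fin N, (⟨c, z k⟩ : ℂ))‖ ≤
      ∑ k, ‖(⟨c, z k⟩ : ℂ)‖ := by simpa using norm_sum_le Finset.univ (fun k => (⟨c, z k⟩ : ℂ))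
  have hsum : (∑ k : Fin N, (⟨c, z k⟩ : ℂ)) = ⟨N * c, ∑ k, z k⟩ := by
    apply Complex.ext <;> simp [Complex.re, Complex.im]
  have habs : ∀ w : ℂ, ‖w‖ = Real.sqrt (w.re ^ 2 + w.im ^ 2) := by
    intro w; rw [Complex.norm_def, Complex.normSq_apply]; ring_nf
  have key : Real.sqrt ((N : ℝ) ^ 2 * c ^ 2 + (∑ k, z k) ^ 2) ≤
      ∑ k, Real.sqrt (x k) * Real.sqrt (y k) := by
    calc Real.sqrt ((N : ℝ) ^ 2 * c ^ 2 + (∑ k, z k) ^ 2)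
        = ‖(∑ k : Fin N, (⟨c, z k⟩ : ℂ))‖ := by
          rw [hsum, habs]; simp; ring_nf
      _ ≤ ∑ k, ‖(⟨c, z k⟩ : ℂ)‖ := tri
      _ ≤ ∑ k, Real.sqrt (x k) * Real.sqrt (y k) := by
          apply Finset.sum_le_sum
          intro k _
          rw [habs, ← Real.sqrt_mul (hx k)]
          apply Real.sqrt_le_sqrt
          simpa using h k
  have h0 : (0:ℝ) ≤ (N : ℝ) ^ 2 * c ^ 2 + (∑ k, z k) ^ 2 := by positivity
  calc (N : ℝ) ^ 2 * c ^ 2 + (∑ k, z k) ^ 2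
      = Real.sqrt ((N : ℝ) ^ 2 * c ^ 2 + (∑ k, z k) ^ 2) ^ 2 := (Real.sq_sqrt h0).symm
    _ ≤ (∑ k, Real.sqrt (x k) * Real.sqrt (y k)) ^ 2 := by
        apply pow_le_pow_left₀ (Real.sqrt_nonneg _) key
    _ ≤ (∑ k, x k) * (∑ k, y k) := cs
end

section
/- Let f(x) = e^{−‖x−a‖²/(2ζ) + d} · e^{2πi(‖x−a‖²/(2ε) + ⟨b,x⟩ + c)} on ℝᴺ with ζ, ε > 0, a, b ∈ ℝᴺ, c, d ∈ ℝ. Then equality holds in the sharper N-dimensional Heisenberg inequality: ∫‖x−a‖²|f|²dx · ∫‖w−b‖²|𝓕f|²dw = (N²/16π²)‖f‖₂⁴ + [∫ ∑_k |x_k−a_k||∂φ/∂x_k − b_k| λ²dx]², where λ(x) = e^{−‖x−a‖²/(2ζ)+d} and φ(x) = ‖x−a‖²/(2ε) + ⟨b,x⟩ + c. -/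
open MeasureTheory Real

lemma oneD_moment {b : ℝ} (hb : 0 < b) :
    ∫ x : ℝ, x ^ 2 * rexp (-b * x ^ 2) = 1 / (2 * b) * Real.sqrt (π / b) := by
  have hint : Integrable (fun x : ℝ => x ^ 2 * rexp (-b * x ^ 2)) := by
    have := integrable_rpow_mul_exp_neg_mul_sq hb (s := 2) (by norm_num)
    simpa [Real.rpow_natCast] using this
  have hIoi : ∫ x in Set.Ioi (0:ℝ), x ^ 2 * rexp (-b * x ^ 2)
      = b ^ (-(3:ℝ)/2) * (1/2) * Gamma ((3:ℝ)/2) := by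
    have h := integral_rpow_mul_exp_neg_mul_rpow (p := 2) (q := 2) (by norm_num) (by norm_num) hb
    rw [show ∫ x in Set.Ioi (0:ℝ), x ^ 2 * rexp (-b * x ^ 2)
        = ∫ x in Set.Ioi (0:ℝ), x ^ (2:ℝ) * rexp (-b * x ^ (2:ℝ)) by
      refine setIntegral_congr_fun measurableSet_Ioi fun x hx => ?_
      rw [← Real.rpow_natCast x 2]; norm_num]
    rw [h]; norm_num
  have hGamma : Gamma ((3:ℝ)/2) = Real.sqrt π / 2 := by
    rw [show ((3:ℝ)/2) = 1/2 + 1 by norm_num, Real.Gamma_add_one (by norm_num),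
      Real.Gamma_one_half_eq]; ring
  have hsplit : ∫ x : ℝ, x ^ 2 * rexp (-b * x ^ 2)
      = 2 * ∫ x in Set.Ioi (0:ℝ), x ^ 2 * rexp (-b * x ^ 2) := by
    rw [← intervalIntegral.integral_Iic_add_Ioi (b := (0:ℝ)) hint.integrableOn hint.integrableOn]
    have h2 : ∫ x in Set.Iic (0:ℝ), x ^ 2 * rexp (-b * x ^ 2)
        = ∫ x in Set.Ioi (0:ℝ), x ^ 2 * rexp (-b * x ^ 2) := by
      rw [show Set.Iic (0:ℝ) = Set.Iic (-0 : ℝ) by norm_num, ← integral_comp_neg_Ioi]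
      simp
    rw [h2]; ring
  rw [hsplit, hIoi, hGamma,
    show (-(3:ℝ)/2) = -((3:ℝ)/2) by ring, Real.rpow_neg hb.le,
    show ((3:ℝ)/2) = 1 + (1:ℝ)/2 by norm_num, Real.rpow_add hb, Real.rpow_one,
    ← Real.sqrt_eq_rpow, Real.sqrt_div pi_nonneg]
  have h1 : (0:ℝ) < Real.sqrt b := Real.sqrt_pos.mpr hb
  have h2 : Real.sqrt b * Real.sqrt b = b := Real.mul_self_sqrt hb.le
  field_simp

lemma sqrt_pow_eq {c : ℝ} (hc : 0 ≤ c) (N : ℕ) : Real.sqrt c ^ N = c ^ ((N:ℝ)/2) := by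
  rw [Real.sqrt_eq_rpow, ← Real.rpow_natCast (c ^ ((1:ℝ)/2)) N, ← Real.rpow_mul hc]
  congr 1; ring

lemma gauss_pi (N : ℕ) {p : ℝ} (hp : 0 < p) :
    ∫ x : Fin N → ℝ, rexp (-p * ∑ k, (x k)^2) = (π/p) ^ ((N:ℝ)/2) := by
  have h : ∀ x : Fin N → ℝ, rexp (-p * ∑ k, (x k)^2) = ∏ k, rexp (-p * (x k)^2) := by
    intro x; rw [← Real.exp_sum]; congr 1; rw [Finset.mul_sum]
  simp_rw [h]
  rw [volume_pi, integral_fintype_prod_eq_pow (fun t : ℝ => rexp (-p * t^2)), integral_gaussian,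
    Fintype.card_fin, sqrt_pow_eq (by positivity)]

lemma gauss_pi_moment (N : ℕ) {p : ℝ} (hp : 0 < p) :
    ∫ x : Fin N → ℝ, (∑ k, (x k)^2) * rexp (-p * ∑ k, (x k)^2)
      = (N / (2*p)) * (π/p) ^ ((N:ℝ)/2) := by
  classical
  set g : Fin N → Fin N → ℝ → ℝ :=
    fun k j t => (if j = k then t^2 else 1) * rexp (-p * t^2) with hg
  have hpt : ∀ x : Fin N → ℝ, (∑ k, (x k)^2) * rexp (-p * ∑ k, (x k)^2)
      = ∑ k, ∏ j, g k j (x j) := by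
    intro x
    have : ∀ k, ∏ j, g k j (x j) = (x k)^2 * ∏ j, rexp (-p * (x j)^2) := by
      intro k
      rw [hg]
      simp only
      rw [Finset.prod_mul_distrib, Finset.prod_ite_eq' Finset.univ k (fun j => (x j)^2)]
      simp
    simp_rw [this, ← Finset.sum_mul]
    congr 1
    rw [← Real.exp_sum]; congr 1; rw [Finset.mul_sum]
  simp_rw [hpt]
  have hint : ∀ k, Integrable (fun x : Fin N → ℝ => ∏ j, g k j (x j)) := by
    intro k
    apply Integrable.fintype_prod (f := g k)
    intro j
    by_cases hj : j = k
    · subst hj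
      simpa [hg] using
        (by simpa [Real.rpow_natCast] using
          integrable_rpow_mul_exp_neg_mul_sq hp (s := 2) (by norm_num) :
          Integrable (fun t : ℝ => t^2 * rexp (-p * t^2)))
    · simpa [hg, hj] using integrable_exp_neg_mul_sq hp
  rw [integral_finset_sum _ (fun k _ => hint k)]
  have hval : ∀ k, ∫ x : Fin N → ℝ, ∏ j, g k j (x j) = (1/(2*p)) * (π/p) ^ ((N:ℝ)/2) := by
    intro k
    rw [volume_pi, integral_fintype_prod_eq_prod (g k)]
    have h1 : ∀ j, (∫ t : ℝ, g k j t)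
        = (if j = k then 1/(2*p) else 1) * Real.sqrt (π/p) := by
      intro j
      by_cases hj : j = k
      · simp only [hg, hj, if_true]
        exact oneD_moment hp
      · simp only [hg, hj, if_false, one_mul]
        rw [integral_gaussian]
    simp_rw [h1]
    rw [Finset.prod_mul_distrib, Finset.prod_ite_eq' Finset.univ k (fun _ => 1/(2*p)),
      Finset.prod_const, Finset.card_univ, Fintype.card_fin, sqrt_pow_eq (by positivity)]
    simp
  simp_rw [hval]
  rw [Finset.sum_const, Finset.card_univ, Fintype.card_fin, nsmul_eq_mul]
  ring

theorem stmt19 (N : ℕ) (zeta eps : ℝ) (hzeta : 0 < zeta) (heps : 0 < eps)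
    (a b : Fin N → ℝ) (c d : ℝ)
    (lam phi : (Fin N → ℝ) → ℝ)
    (hlamdef : ∀ x, lam x = Real.exp (-(∑ k, (x k - a k) ^ 2) / (2 * zeta) + d))
    (hphidef : ∀ x, phi x = (∑ k, (x k - a k) ^ 2) / (2 * eps) + (∑ k, b k * x k) + c)
    (f F : (Fin N → ℝ) → ℂ)
    (hf : ∀ x, f x = (lam x : ℂ) * Complex.exp (2 * (Real.pi : ℂ) * Complex.I * (phi x : ℂ)))
    (hF : ∀ w, F w = ∫ x : Fin N → ℝ,
      f x * Complex.exp (-2 * (Real.pi : ℂ) * Complex.I * ((∑ j, x j * w j : ℝ) : ℂ))) :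
    (∫ x : Fin N → ℝ, (∑ k, (x k - a k) ^ 2) * ‖f x‖ ^ 2) *
        ∫ w : Fin N → ℝ, (∑ k, (w k - b k) ^ 2) * ‖F w‖ ^ 2 =
      (N : ℝ) ^ 2 / (16 * Real.pi ^ 2) * (∫ x : Fin N → ℝ, ‖f x‖ ^ 2) ^ 2 +
        (∫ x : Fin N → ℝ,
          (∑ k, |x k - a k| * |fderiv ℝ phi x (Pi.single k 1) - b k|) * lam x ^ 2) ^ 2 := by
  have hπ : (0:ℝ) < π := pi_pos
  -- basic quantities
  set β : ℂ := ((1/(2*zeta) : ℝ) : ℂ) - ((π/eps : ℝ) : ℂ) * Complex.I with hβ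
  have hβre : β.re = 1/(2*zeta) := by simp [hβ]
  have hβim : β.im = -(π/eps) := by simp [hβ]
  have hβpos : 0 < β.re := by rw [hβre]; positivity
  have hβne : β ≠ 0 := fun h => by rw [h] at hβpos; simp at hβpos
  set M : ℝ := 1/(4*zeta^2) + π^2/eps^2 with hMdef
  have hMpos : 0 < M := by rw [hMdef]; positivity
  have hM : Complex.normSq β = M := by
    rw [Complex.normSq_apply, hβre, hβim, hMdef]
    field_simp; ring
  set γ : ℝ := π^2/(zeta*M) with hγdef
  have hγpos : 0 < γ := by rw [hγdef]; positivity
  -- norm of f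
  have hlampos : ∀ x, 0 < lam x := fun x => by rw [hlamdef]; exact Real.exp_pos _
  have hnormf : ∀ x, ‖f x‖ = lam x := by
    intro x
    rw [hf x, norm_mul, Complex.norm_real, Real.norm_eq_abs,
      Complex.norm_exp, abs_of_pos (hlampos x)]
    have : (2 * (π:ℂ) * Complex.I * ((phi x : ℝ):ℂ)).re = 0 := by
      simp [Complex.mul_re]
    rw [this, Real.exp_zero, mul_one]
  -- squared norm of f as translated gaussian
  have hsq : ∀ x : Fin N → ℝ, ‖f x‖^2
      = rexp (2*d) * ((fun y : Fin N → ℝ => rexp (-(1/zeta) * ∑ k, (y k)^2)) (x - a)) := by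
    intro x
    rw [hnormf x, hlamdef]
    simp only [Pi.sub_apply]
    rw [sq, ← Real.exp_add, ← Real.exp_add]
    congr 1
    field_simp
    ring
  have hzne : zeta ≠ 0 := ne_of_gt hzeta
  have hinvz : (0:ℝ) < 1/zeta := by positivity
  have hpz : π/(1/zeta) = π * zeta := by field_simp
  -- ∫ ‖f‖²
  have h_I2 : ∫ x : Fin N → ℝ, ‖f x‖^2 = rexp (2*d) * (π*zeta) ^ ((N:ℝ)/2) := by
    simp_rw [hsq]
    rw [integral_const_mul, integral_sub_right_eq_self
      (fun y : Fin N → ℝ => rexp (-(1/zeta) * ∑ k, (y k)^2)) a, gauss_pi N hinvz, hpz]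
  -- ∫ S ‖f‖²
  have h_Ix : ∫ x : Fin N → ℝ, (∑ k, (x k - a k)^2) * ‖f x‖^2
      = (N * zeta / 2) * (rexp (2*d) * (π*zeta) ^ ((N:ℝ)/2)) := by
    have hpt : ∀ x : Fin N → ℝ, (∑ k, (x k - a k)^2) * ‖f x‖^2
        = rexp (2*d) * ((fun y : Fin N → ℝ =>
            (∑ k, (y k)^2) * rexp (-(1/zeta) * ∑ k, (y k)^2)) (x - a)) := by
      intro x
      rw [hsq x]
      simp only [Pi.sub_apply]
      ring
    simp_rw [hpt]
    rw [integral_const_mul, integral_sub_right_eq_self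
      (fun y : Fin N → ℝ => (∑ k, (y k)^2) * rexp (-(1/zeta) * ∑ k, (y k)^2)) a,
      gauss_pi_moment N hinvz, hpz]
    field_simp
  -- fderiv of phi
  have hfderiv : ∀ x k, fderiv ℝ phi x (Pi.single k 1) = (x k - a k) / eps + b k := by
    intro x k
    have hphi_eq : phi = fun y : Fin N → ℝ => (∑ j, ((y j - a j)^2/(2*eps) + b j * y j)) + c := by
      funext y; rw [hphidef, Finset.sum_add_distrib, ← Finset.sum_div]
    have hd : HasFDerivAt phi
        (∑ j, ((x j - a j)/eps + b j) • (ContinuousLinearMap.proj j : (Fin N → ℝ) →L[ℝ] ℝ)) x := by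
      rw [hphi_eq]
      apply HasFDerivAt.add_const
      apply HasFDerivAt.fun_sum
      intro j _
      have h1 : HasFDerivAt (fun y : Fin N → ℝ => y j)
          (ContinuousLinearMap.proj j : (Fin N → ℝ) →L[ℝ] ℝ) x :=
        (ContinuousLinearMap.proj j : (Fin N → ℝ) →L[ℝ] ℝ).hasFDerivAt
      have h2 : HasDerivAt (fun t : ℝ => (t - a j)^2/(2*eps) + b j * t)
          ((x j - a j)/eps + b j) (x j) := by
        have ha : HasDerivAt (fun t : ℝ => (t - a j)^2/(2*eps)) ((x j - a j)/eps) (x j) := by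
          have := (((hasDerivAt_id (x j)).sub_const (a j)).pow 2).div_const (2*eps)
          refine this.congr_deriv ?_
          simp only [id, Nat.cast_ofNat, Nat.add_one_sub_one, pow_one, mul_one]
          field_simp
        have hb : HasDerivAt (fun t : ℝ => b j * t) (b j) (x j) := by
          simpa using (hasDerivAt_id (x j)).const_mul (b j)
        exact ha.add hb
      exact h2.comp_hasFDerivAt x h1
    rw [hd.fderiv]
    simp only [ContinuousLinearMap.coe_sum', Finset.sum_apply, ContinuousLinearMap.coe_smul',
      Pi.smul_apply, ContinuousLinearMap.proj_apply, Pi.single_apply, smul_eq_mul]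
    simp only [mul_ite, mul_one, mul_zero, Finset.sum_ite_eq', Finset.mem_univ, if_true]
  -- covariance integral
  have h_cov : ∫ x : Fin N → ℝ,
      (∑ k, |x k - a k| * |fderiv ℝ phi x (Pi.single k 1) - b k|) * lam x ^ 2
      = (1/eps) * ((N * zeta / 2) * (rexp (2*d) * (π*zeta) ^ ((N:ℝ)/2))) := by
    have hpt : ∀ x : Fin N → ℝ,
        (∑ k, |x k - a k| * |fderiv ℝ phi x (Pi.single k 1) - b k|) * lam x ^ 2
        = (1/eps) * ((∑ k, (x k - a k)^2) * ‖f x‖^2) := by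
      intro x
      have hterm : ∀ k, |x k - a k| * |fderiv ℝ phi x (Pi.single k 1) - b k|
          = (1/eps) * (x k - a k)^2 := by
        intro k
        rw [hfderiv x k, show (x k - a k)/eps + b k - b k = (x k - a k)/eps by ring,
          abs_div, abs_of_pos heps, div_eq_mul_inv, ← mul_assoc, abs_mul_abs_self]
        ring
      simp_rw [hterm]
      rw [← Finset.mul_sum, hnormf x]
      ring
    simp_rw [hpt]
    rw [integral_const_mul, h_Ix]
  -- Fourier side
  have hFval : ∀ w : Fin N → ℝ, F w
      = Complex.exp ((d : ℂ) + 2 * (π:ℂ) * Complex.I *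
          (((∑ k, b k * a k : ℝ) : ℂ) + (c:ℂ) - ((∑ j, a j * w j : ℝ) : ℂ)))
        * ((π:ℂ)/β) ^ ((N:ℂ)/2)
        * Complex.exp (-(π:ℂ)^2 * ((∑ k, (w k - b k)^2 : ℝ):ℂ) / β) := by
    intro w
    set K : ℂ := (d : ℂ) + 2 * (π:ℂ) * Complex.I *
        (((∑ k, b k * a k : ℝ) : ℂ) + (c:ℂ) - ((∑ j, a j * w j : ℝ) : ℂ)) with hK
    set T : ℝ := ∑ k, (w k - b k)^2 with hT
    rw [hF w]
    have hpt : ∀ x : Fin N → ℝ,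
        f x * Complex.exp (-2 * (π:ℂ) * Complex.I * ((∑ j, x j * w j : ℝ) : ℂ))
        = (fun y : Fin N → ℝ => Complex.exp (-β * ∑ k, ((y k : ℝ) : ℂ)^2
            + ∑ k, (2 * (π:ℂ) * Complex.I * (((b k : ℝ):ℂ) - ((w k : ℝ):ℂ))) * ((y k : ℝ):ℂ))
            * Complex.exp K) (x - a) := by
      intro x
      simp only [Pi.sub_apply]
      rw [hf x, hlamdef, hphidef, Complex.ofReal_exp, ← Complex.exp_add, ← Complex.exp_add,
        ← Complex.exp_add]
      congr 1
      have expand : ∑ k, (2 * (π:ℂ) * Complex.I * (((b k : ℝ):ℂ) - ((w k : ℝ):ℂ)))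
            * (((x k - a k : ℝ)):ℂ)
          = 2 * (π:ℂ) * Complex.I * ((∑ k, ((b k:ℝ):ℂ) * ((x k:ℝ):ℂ))
            - (∑ k, ((x k:ℝ):ℂ) * ((w k:ℝ):ℂ)) - (∑ k, ((b k:ℝ):ℂ) * ((a k:ℝ):ℂ))
            + (∑ k, ((a k:ℝ):ℂ) * ((w k:ℝ):ℂ))) := by
        simp only [mul_sub, Finset.mul_sum, ← Finset.sum_sub_distrib, ← Finset.sum_add_distrib]
        apply Finset.sum_congr rfl
        intro j _
        push_cast
        ring
      rw [expand]
      simp only [hβ, hK]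
      push_cast
      ring
    simp only [hpt]
    rw [integral_sub_right_eq_self (fun y : Fin N → ℝ => Complex.exp (-β * ∑ k, ((y k : ℝ) : ℂ)^2
            + ∑ k, (2 * (π:ℂ) * Complex.I * (((b k : ℝ):ℂ) - ((w k : ℝ):ℂ))) * ((y k : ℝ):ℂ))
            * Complex.exp K) a]
    rw [integral_mul_const]
    rw [GaussianFourier.integral_cexp_neg_mul_sum_add hβpos
      (fun k => 2 * (π:ℂ) * Complex.I * (((b k : ℝ):ℂ) - ((w k : ℝ):ℂ)))]
    have hsum : (∑ k, (2 * (π:ℂ) * Complex.I * (((b k : ℝ):ℂ) - ((w k : ℝ):ℂ)))^2)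
        = -4 * (π:ℂ)^2 * (T:ℂ) := by
      have hTc : ((T:ℝ):ℂ) = ∑ k, (((w k:ℝ):ℂ) - ((b k:ℝ):ℂ))^2 := by
        rw [hT]; push_cast; rfl
      rw [hTc, Finset.mul_sum]
      apply Finset.sum_congr rfl
      intro j _
      linear_combination (4 * (π:ℂ)^2 * (((b j:ℝ):ℂ) - ((w j:ℝ):ℂ))^2) * Complex.I_sq
    rw [hsum, Fintype.card_fin]
    rw [show (-4 * (π:ℂ)^2 * (T:ℂ)) / (4 * β) = -(π:ℂ)^2 * (T:ℂ) / β by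
      field_simp]
    ring
  -- norm of F squared
  have hFnorm : ∀ w : Fin N → ℝ, ‖F w‖^2
      = rexp (2*d) * (π^2/M) ^ ((N:ℝ)/2) * rexp (-γ * ∑ k, (w k - b k)^2) := by
    intro w
    rw [hFval w, norm_mul, norm_mul, Complex.norm_exp, Complex.norm_exp,
      Complex.norm_cpow_of_ne_zero (div_ne_zero (Complex.ofReal_ne_zero.mpr (ne_of_gt hπ)) hβne)]
    have h1 : ((d : ℂ) + 2 * (π:ℂ) * Complex.I *
        (((∑ k, b k * a k : ℝ) : ℂ) + (c:ℂ) - ((∑ j, a j * w j : ℝ) : ℂ))).re = d := by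
      simp [Complex.mul_re]
    have h2 : (-(π:ℂ)^2 * ((∑ k, (w k - b k)^2 : ℝ):ℂ) / β).re
        = -(π^2 * (∑ k, (w k - b k)^2)) * (1/(2*zeta)) / M := by
      have hcast : (-(π:ℂ)^2 * ((∑ k, (w k - b k)^2 : ℝ):ℂ))
          = ((-(π^2 * (∑ k, (w k - b k)^2)) : ℝ) : ℂ) := by push_cast; ring
      rw [Complex.div_re, hM, hβre, hβim, hcast, Complex.ofReal_re, Complex.ofReal_im]
      field_simp
      ring
    have h3 : (((N:ℂ))/2).im = 0 := by
      simp
    have h4 : (((N:ℂ))/2).re = (N:ℝ)/2 := by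
      simp
    rw [h1, h2, h3, h4, mul_zero, Real.exp_zero, div_one, norm_div, Complex.norm_real, Real.norm_eq_abs,
      abs_of_pos hπ]
    have h5 : (π / ‖β‖) ^ ((N:ℝ)/2) * (π / ‖β‖) ^ ((N:ℝ)/2)
        = (π^2/M) ^ ((N:ℝ)/2) := by
      rw [← Real.mul_rpow (by positivity) (by positivity)]
      congr 1
      rw [div_mul_div_comm, ← pow_two, ← pow_two, Complex.sq_norm, hM]
    have hu : -(π^2 * (∑ k, (w k - b k)^2)) * (1/(2*zeta)) / M
          + -(π^2 * (∑ k, (w k - b k)^2)) * (1/(2*zeta)) / M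
        = -γ * ∑ k, (w k - b k)^2 := by
      rw [hγdef]; field_simp; ring
    calc (rexp d * (π / ‖β‖) ^ ((N:ℝ)/2)
          * rexp (-(π^2 * (∑ k, (w k - b k)^2)) * (1/(2*zeta)) / M))^2
        = (rexp d * rexp d)
          * ((π / ‖β‖) ^ ((N:ℝ)/2) * (π / ‖β‖) ^ ((N:ℝ)/2))
          * (rexp (-(π^2 * (∑ k, (w k - b k)^2)) * (1/(2*zeta)) / M)
            * rexp (-(π^2 * (∑ k, (w k - b k)^2)) * (1/(2*zeta)) / M)) := by ring
      _ = rexp (2*d) * (π^2/M) ^ ((N:ℝ)/2) * rexp (-γ * ∑ k, (w k - b k)^2) := by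
          rw [h5, ← Real.exp_add, ← Real.exp_add, hu, show d + d = 2*d by ring]
  -- ∫ T ‖F‖²
  have h_L2 : ∫ w : Fin N → ℝ, (∑ k, (w k - b k)^2) * ‖F w‖^2
      = (N * zeta * M / (2 * π^2)) * (rexp (2*d) * (π*zeta) ^ ((N:ℝ)/2)) := by
    have hpt : ∀ w : Fin N → ℝ, (∑ k, (w k - b k)^2) * ‖F w‖^2
        = (rexp (2*d) * (π^2/M) ^ ((N:ℝ)/2)) * ((fun y : Fin N → ℝ =>
            (∑ k, (y k)^2) * rexp (-γ * ∑ k, (y k)^2)) (w - b)) := by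
      intro w
      rw [hFnorm w]
      simp only [Pi.sub_apply]
      ring
    simp_rw [hpt]
    rw [integral_const_mul, integral_sub_right_eq_self
      (fun y : Fin N → ℝ => (∑ k, (y k)^2) * rexp (-γ * ∑ k, (y k)^2)) b,
      gauss_pi_moment N hγpos]
    have hcomb : (π^2/M) ^ ((N:ℝ)/2) * (π/γ) ^ ((N:ℝ)/2) = (π*zeta) ^ ((N:ℝ)/2) := by
      rw [← Real.mul_rpow (by positivity) (by positivity)]
      congr 1
      rw [hγdef]
      field_simp
    have hNg : (N:ℝ) / (2*γ) = N * zeta * M / (2 * π^2) := by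
      rw [hγdef]; field_simp
    calc rexp (2*d) * (π^2/M) ^ ((N:ℝ)/2) * ((N:ℝ) / (2*γ) * (π/γ) ^ ((N:ℝ)/2))
        = ((N:ℝ)/(2*γ)) * (rexp (2*d) * ((π^2/M) ^ ((N:ℝ)/2) * (π/γ) ^ ((N:ℝ)/2))) := by ring
      _ = (N * zeta * M / (2 * π^2)) * (rexp (2*d) * (π*zeta) ^ ((N:ℝ)/2)) := by
        rw [hcomb, hNg]
  -- put everything together
  rw [h_Ix, h_L2, h_I2, h_cov]
  have hπne : π ≠ 0 := ne_of_gt hπ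
  have hεne : eps ≠ 0 := ne_of_gt heps
  set E : ℝ := rexp (2*d) * (π*zeta) ^ ((N:ℝ)/2) with hE
  rw [hMdef]
  field_simp
  ring
end
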